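/- Let P₁ and P₂ be rank-one orthogonal projections on a finite-dimensional complex Hilbert space with 0 < Tr(P₁P₂) < 1, and let ρ = ½P₁ + ½P₂. Under the MKC product-measure construction treating P₁ and P₂ as lying in distinct (totally incompatible) contexts, ℙ_ρ[λ(P₁)=1 and λ(P₂)=1] = (½ + ½Tr(P₁P₂))², which differs from ½ℙ_{P₁}[λ(P₁)=1, λ(P₂)=1] + ½ℙ_{P₂}[λ(P₁)=1, λ(P₂)=1] = Tr(P₁P₂). Hence ℙ_ρ ≠ ½ℙ_{P₁} + ½ℙ_{P₂}. -/

import Mathlib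

/-- The rank-one orthogonal projection onto the span of a unit vector `v`. -/
noncomputable def rankOne {n : ℕ} (v : EuclideanSpace ℂ (Fin n)) :
    EuclideanSpace ℂ (Fin n) →ₗ[ℂ] EuclideanSpace ℂ (Fin n) :=
  ((innerSL ℂ v).smulRight v).toLinearMap

/-- The MKC joint probability that both `P₁` and `P₂` (lying in distinct totally
incompatible contexts) take the value `1` in state `σ`: the product of the two
Born probabilities. -/
noncomputable def mkcJoint {n : ℕ}
    (σ P₁ P₂ : EuclideanSpace ℂ (Fin n) →ₗ[ℂ] EuclideanSpace ℂ (Fin n)) : ℝ :=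
  (LinearMap.trace ℂ _ (σ * P₁)).re * (LinearMap.trace ℂ _ (σ * P₂)).re

lemma tr_comp_rankOne {n : ℕ}
    (σ : EuclideanSpace ℂ (Fin n) →ₗ[ℂ] EuclideanSpace ℂ (Fin n))
    (v : EuclideanSpace ℂ (Fin n)) :
    LinearMap.trace ℂ _ (σ * rankOne v) = inner ℂ v (σ v) := by
  rw [LinearMap.trace_eq_matrix_trace ℂ (PiLp.basisFun 2 ℂ (Fin n))]
  simp [Matrix.trace, LinearMap.toMatrix_apply, rankOne, Matrix.diag,
    PiLp.inner_apply, inner, Finset.mul_sum, mul_comm]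

lemma rankOne_apply' {n : ℕ} (v x : EuclideanSpace ℂ (Fin n)) :
    rankOne v x = (inner ℂ v x : ℂ) • v := rfl

/-- Failure of convexity of the MKC measures: for rank-one projections `P₁, P₂`
with `0 < Tr(P₁P₂) < 1` and `ρ = ½P₁ + ½P₂`, the MKC joint probability
`ℙ_ρ[λ(P₁)=1, λ(P₂)=1]` equals `(½ + ½Tr(P₁P₂))²`, whereas the convex combination
`½ℙ_{P₁}[…] + ½ℙ_{P₂}[…]` equals `Tr(P₁P₂)`, and these differ; hence
`ℙ_ρ ≠ ½ℙ_{P₁} + ½ℙ_{P₂}`. -/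
theorem mkc_preparation_noncontextuality_convexity_failure {n : ℕ}
    (v w : EuclideanSpace ℂ (Fin n)) (hv : ‖v‖ = 1) (hw : ‖w‖ = 1)
    (P₁ P₂ ρ : EuclideanSpace ℂ (Fin n) →ₗ[ℂ] EuclideanSpace ℂ (Fin n))
    (hP₁ : P₁ = rankOne v) (hP₂ : P₂ = rankOne w)
    (t : ℝ) (ht : t = (LinearMap.trace ℂ _ (P₁ * P₂)).re)
    (ht0 : 0 < t) (ht1 : t < 1)
    (hρ : ρ = (1/2 : ℂ) • P₁ + (1/2 : ℂ) • P₂) :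
    mkcJoint ρ P₁ P₂ = (1/2 + 1/2 * t)^2 ∧
    (1/2 : ℝ) * mkcJoint P₁ P₁ P₂ + (1/2 : ℝ) * mkcJoint P₂ P₁ P₂ = t ∧
    mkcJoint ρ P₁ P₂ ≠
      (1/2 : ℝ) * mkcJoint P₁ P₁ P₂ + (1/2 : ℝ) * mkcJoint P₂ P₁ P₂ := by
  have hvv : (inner ℂ v v : ℂ) = 1 := by
    rw [inner_self_eq_norm_sq_to_K, hv]; norm_num
  have hww : (inner ℂ w w : ℂ) = 1 := by
    rw [inner_self_eq_norm_sq_to_K, hw]; norm_num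
  have h11 : LinearMap.trace ℂ _ (P₁ * P₁) = 1 := by
    rw [hP₁, tr_comp_rankOne, rankOne_apply', inner_smul_right, hvv]; ring
  have h22 : LinearMap.trace ℂ _ (P₂ * P₂) = 1 := by
    rw [hP₂, tr_comp_rankOne, rankOne_apply', inner_smul_right, hww]; ring
  have h12 : LinearMap.trace ℂ _ (P₁ * P₂) = (inner ℂ v w : ℂ) * (inner ℂ w v : ℂ) := by
    rw [hP₂, tr_comp_rankOne, hP₁, rankOne_apply', inner_smul_right]
  have h21 : LinearMap.trace ℂ _ (P₂ * P₁) = (inner ℂ w v : ℂ) * (inner ℂ v w : ℂ) := by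
    rw [hP₁, tr_comp_rankOne, hP₂, rankOne_apply', inner_smul_right]
  have h21' : (LinearMap.trace ℂ _ (P₂ * P₁)).re = t := by
    rw [h21, mul_comm, ← h12, ← ht]
  have h12' : (LinearMap.trace ℂ _ (P₁ * P₂)).re = t := ht.symm
  have hρ1 : (LinearMap.trace ℂ _ (ρ * P₁)).re = 1/2 + 1/2 * t := by
    rw [hρ, add_mul, smul_mul_assoc, smul_mul_assoc, map_add, map_smul, map_smul,
      h11, Complex.add_re]
    simp [smul_eq_mul, Complex.mul_re]
    rw [h21']
  have hρ2 : (LinearMap.trace ℂ _ (ρ * P₂)).re = 1/2 + 1/2 * t := by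
    rw [hρ, add_mul, smul_mul_assoc, smul_mul_assoc, map_add, map_smul, map_smul,
      h22, Complex.add_re]
    simp [smul_eq_mul, Complex.mul_re]
    rw [h12']
    ring
  have e1 : mkcJoint ρ P₁ P₂ = (1/2 + 1/2 * t)^2 := by
    rw [mkcJoint, hρ1, hρ2]; ring
  have e2 : (1/2 : ℝ) * mkcJoint P₁ P₁ P₂ + (1/2 : ℝ) * mkcJoint P₂ P₁ P₂ = t := by
    rw [mkcJoint, mkcJoint]
    rw [h11, h12', h21', h22]
    simp
    ring
  refine ⟨e1, e2, ?_⟩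
  rw [e1, e2]
  nlinarith [sq_nonneg (1 - t)]
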